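/- arXiv:2403.13157 — 4 statements merged into one kernel-verified Lean document; each statement's English description precedes it below -/
import Mathlib

section
/- Let σ, t, β be real numbers with β ≥ 0, and let 1 ≤ M₁ < M₂. Then |∑_{M₁ < m ≤ M₂} m^{-(σ+it)}| ≤ 4 M₂^β · max_{M₁ < y ≤ M₂} |∑_{M₁ < m ≤ y} m^{-(σ+β+it)}|. -/
open Finset Complex

lemma abel_aux (f : ℕ → ℂ) (β : ℝ) (hβ : 0 ≤ β) (a : ℕ) (C : ℝ)
    (n : ℕ) (hn : a + 1 ≤ n)
    (hC : ∀ k, a < k → k ≤ n → ‖∑ m ∈ Finset.Ioc a k, f m‖ ≤ C) :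
    ‖(∑ m ∈ Finset.Ioc a n, f m * (((m:ℝ)^β : ℝ) : ℂ)) -
      (∑ m ∈ Finset.Ioc a n, f m) * ((((n:ℝ))^β : ℝ) : ℂ)‖ ≤
      ((n:ℝ)^β - ((a:ℝ)+1)^β) * C := by
  induction n, hn using Nat.le_induction with
  | base =>
    have h : Finset.Ioc a (a+1) = {a+1} := by
      ext x; simp only [Finset.mem_Ioc, Finset.mem_singleton]; omega
    simp only [h, Finset.sum_singleton]
    push_cast
    simp [sub_self]
  | succ n hn ih =>
    have hC' : ∀ k, a < k → k ≤ n → ‖∑ m ∈ Finset.Ioc a k, f m‖ ≤ C :=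
      fun k h1 h2 => hC k h1 (h2.trans (Nat.le_succ n))
    have ih' := ih hC'
    have han : a ≤ n := le_trans (Nat.le_succ a) hn
    rw [Finset.sum_Ioc_succ_top han, Finset.sum_Ioc_succ_top han]
    set A := ∑ m ∈ Finset.Ioc a n, f m with hA
    set S := ∑ m ∈ Finset.Ioc a n, f m * (((m:ℝ)^β : ℝ) : ℂ) with hS
    have hAC : ‖A‖ ≤ C := hC n (Nat.lt_of_succ_le hn) (Nat.le_succ n)
    have hC0 : 0 ≤ C := le_trans (norm_nonneg _) hAC
    have hmono : (n:ℝ)^β ≤ ((n:ℝ)+1)^β :=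
      Real.rpow_le_rpow (Nat.cast_nonneg n) (by linarith) hβ
    have hmono2 : ((a:ℝ)+1)^β ≤ (n:ℝ)^β :=
      Real.rpow_le_rpow (by positivity) (by exact_mod_cast hn) hβ
    have key : S + f (n+1) * ((((n+1:ℕ):ℝ)^β : ℝ) : ℂ) -
        (A + f (n+1)) * ((((n+1:ℕ):ℝ)^β : ℝ) : ℂ) =
        (S - A * (((n:ℝ)^β : ℝ) : ℂ)) +
          A * ((((n:ℝ)^β : ℝ) : ℂ) - ((((n+1:ℕ):ℝ)^β : ℝ) : ℂ)) := by ring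
    rw [key]
    calc ‖(S - A * (((n:ℝ)^β : ℝ) : ℂ)) +
          A * ((((n:ℝ)^β : ℝ) : ℂ) - ((((n+1:ℕ):ℝ)^β : ℝ) : ℂ))‖
        ≤ ‖S - A * (((n:ℝ)^β : ℝ) : ℂ)‖ +
          ‖A * ((((n:ℝ)^β : ℝ) : ℂ) - ((((n+1:ℕ):ℝ)^β : ℝ) : ℂ))‖ := norm_add_le _ _
      _ ≤ ((n:ℝ)^β - ((a:ℝ)+1)^β) * C + ‖A‖ * |(n:ℝ)^β - ((n:ℝ)+1)^β| := by
          rw [norm_mul]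
          gcongr
          rw [← Complex.ofReal_sub, Complex.norm_real]
          push_cast
          exact le_refl _
      _ ≤ ((n:ℝ)^β - ((a:ℝ)+1)^β) * C + C * (((n:ℝ)+1)^β - (n:ℝ)^β) := by
          rw [abs_sub_comm, _root_.abs_of_nonneg (by linarith)]
          gcongr
      _ = ((((n:ℕ):ℝ)+1)^β - ((a:ℝ)+1)^β) * C := by ring
      _ = (((n+1:ℕ):ℝ)^β - ((a:ℝ)+1)^β) * C := by push_cast; ring

/-- Partial summation comparison, case β ≥ 0. -/
theorem stmt_0 (σ t β M₁ M₂ : ℝ) (hβ : 0 ≤ β) (hM₁ : 1 ≤ M₁) (hM : M₁ < M₂) :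
    ∃ y ∈ Set.Ioc M₁ M₂,
      ‖∑ m ∈ Finset.Ioc ⌊M₁⌋₊ ⌊M₂⌋₊, (m : ℂ) ^ (-((σ : ℂ) + t * Complex.I))‖ ≤
        4 * M₂ ^ β *
          ‖∑ m ∈ Finset.Ioc ⌊M₁⌋₊ ⌊y⌋₊, (m : ℂ) ^ (-((σ : ℂ) + (β : ℂ) + t * Complex.I))‖ := by
  set a := ⌊M₁⌋₊ with ha
  set N := ⌊M₂⌋₊ with hN
  have hM₂0 : (0:ℝ) ≤ M₂ := by linarith
  have hM₂β : (0:ℝ) ≤ M₂ ^ β := Real.rpow_nonneg hM₂0 β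
  by_cases hNa : N ≤ a
  · refine ⟨M₂, ⟨hM, le_refl _⟩, ?_⟩
    rw [Finset.Ioc_eq_empty (not_lt.mpr hNa), Finset.sum_empty, norm_zero]
    positivity
  push_neg at hNa
  have ha1 : 1 ≤ a := Nat.le_floor (by exact_mod_cast hM₁)
  set f : ℕ → ℂ := fun m => (m : ℂ) ^ (-((σ : ℂ) + (β : ℂ) + t * Complex.I)) with hf
  obtain ⟨k₀, hk₀mem, hk₀max⟩ := Finset.exists_max_image (Finset.Ioc a N)
    (fun k => ‖∑ m ∈ Finset.Ioc a k, f m‖) ⟨N, Finset.mem_Ioc.mpr ⟨hNa, le_refl N⟩⟩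
  rw [Finset.mem_Ioc] at hk₀mem
  set C := ‖∑ m ∈ Finset.Ioc a k₀, f m‖ with hCdef
  have hC : ∀ k, a < k → k ≤ N → ‖∑ m ∈ Finset.Ioc a k, f m‖ ≤ C := by
    intro k h1 h2
    exact hk₀max k (Finset.mem_Ioc.mpr ⟨h1, h2⟩)
  refine ⟨(k₀ : ℝ), ⟨?_, ?_⟩, ?_⟩
  · calc M₁ < (a:ℝ) + 1 := Nat.lt_floor_add_one M₁
      _ ≤ (k₀ : ℝ) := by exact_mod_cast hk₀mem.1
  · calc (k₀ : ℝ) ≤ (N : ℝ) := by exact_mod_cast hk₀mem.2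
      _ ≤ M₂ := Nat.floor_le hM₂0
  · rw [Nat.floor_natCast]
    -- rewrite the LHS sum
    have hsum : ∑ m ∈ Finset.Ioc a N, (m : ℂ) ^ (-((σ : ℂ) + t * Complex.I)) =
        ∑ m ∈ Finset.Ioc a N, f m * (((m:ℝ)^β : ℝ) : ℂ) := by
      apply Finset.sum_congr rfl
      intro m hm
      rw [Finset.mem_Ioc] at hm
      have hm1 : 1 ≤ m := le_trans ha1 (le_of_lt hm.1)
      have hm0 : (m : ℂ) ≠ 0 := Nat.cast_ne_zero.mpr (by omega)
      have : -((σ : ℂ) + t * Complex.I) =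
          (-((σ : ℂ) + (β : ℂ) + t * Complex.I)) + (β : ℂ) := by ring
      rw [this, Complex.cpow_add _ _ hm0, hf]
      congr 1
      rw [show ((m:ℕ):ℂ) = (((m:ℕ):ℝ):ℂ) by norm_num,
        ← Complex.ofReal_cpow (Nat.cast_nonneg m)]
    rw [hsum]
    have key := abel_aux f β hβ a C N hNa hC
    have hAN : ‖∑ m ∈ Finset.Ioc a N, f m‖ ≤ C := hC N hNa (le_refl N)
    have hC0 : 0 ≤ C := le_trans (norm_nonneg _) hAN
    have hNβ : ((N:ℝ))^β ≤ M₂ ^ β :=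
      Real.rpow_le_rpow (Nat.cast_nonneg N) (Nat.floor_le hM₂0) hβ
    have haβ : 0 ≤ ((a:ℝ)+1)^β := Real.rpow_nonneg (by positivity) β
    calc ‖∑ m ∈ Finset.Ioc a N, f m * (((m:ℝ)^β : ℝ) : ℂ)‖
        ≤ ‖(∑ m ∈ Finset.Ioc a N, f m * (((m:ℝ)^β : ℝ) : ℂ)) -
            (∑ m ∈ Finset.Ioc a N, f m) * ((((N:ℝ))^β : ℝ) : ℂ)‖ +
          ‖(∑ m ∈ Finset.Ioc a N, f m) * ((((N:ℝ))^β : ℝ) : ℂ)‖ := by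
            simpa using norm_add_le
              ((∑ m ∈ Finset.Ioc a N, f m * (((m:ℝ)^β : ℝ) : ℂ)) -
                (∑ m ∈ Finset.Ioc a N, f m) * ((((N:ℝ))^β : ℝ) : ℂ))
              ((∑ m ∈ Finset.Ioc a N, f m) * ((((N:ℝ))^β : ℝ) : ℂ))
      _ ≤ ((N:ℝ)^β - ((a:ℝ)+1)^β) * C + C * (N:ℝ)^β := by
            refine add_le_add key ?_
            rw [norm_mul, Complex.norm_real, Real.norm_eq_abs,
              _root_.abs_of_nonneg (Real.rpow_nonneg (Nat.cast_nonneg N) β)]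
            exact mul_le_mul_of_nonneg_right hAN (Real.rpow_nonneg (Nat.cast_nonneg N) β)
      _ ≤ 4 * M₂ ^ β * C := by nlinarith [Real.rpow_nonneg (Nat.cast_nonneg N : (0:ℝ) ≤ N) β]
end

section
/- Let σ, t, β be real numbers with β < 0, and let 1 ≤ M₁ < M₂. Then |∑_{M₁ < m ≤ M₂} m^{-(σ+it)}| ≤ 4 M₁^β · max_{M₁ < y ≤ M₂} |∑_{M₁ < m ≤ y} m^{-(σ+β+it)}|. -/
open Finset Complex

private lemma tel_sum (c : ℕ → ℝ) (a b : ℕ) (hab : a ≤ b) :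
    ∑ i ∈ Finset.Ico a b, (c i - c (i + 1)) = c a - c b := by
  induction b, hab using Nat.le_induction with
  | base => simp
  | succ b hab ih => rw [Finset.sum_Ico_succ_top hab, ih]; ring

/-- Partial summation comparison, case β < 0. -/
theorem stmt_1 (σ t β M₁ M₂ : ℝ) (hβ : β < 0) (hM₁ : 1 ≤ M₁) (hM : M₁ < M₂) :
    ∃ y ∈ Set.Ioc M₁ M₂,
      ‖∑ m ∈ Finset.Ioc ⌊M₁⌋₊ ⌊M₂⌋₊, (m : ℂ) ^ (-((σ : ℂ) + t * Complex.I))‖ ≤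
        4 * M₁ ^ β *
          ‖∑ m ∈ Finset.Ioc ⌊M₁⌋₊ ⌊y⌋₊, (m : ℂ) ^ (-((σ : ℂ) + (β : ℂ) + t * Complex.I))‖ := by
  set N₁ := ⌊M₁⌋₊ with hN₁def
  set N₂ := ⌊M₂⌋₊ with hN₂def
  have hM₁pos : (0 : ℝ) < M₁ := lt_of_lt_of_le one_pos hM₁
  have hN₁1 : 1 ≤ N₁ := Nat.le_floor (by exact_mod_cast hM₁)
  rcases le_or_gt N₂ N₁ with hle | hlt
  · refine ⟨M₂, ⟨hM, le_refl _⟩, ?_⟩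
    rw [Finset.Ioc_eq_empty (by omega)]
    simp
  -- Main case: N₁ < N₂
  set a : ℕ → ℂ := fun m => (m : ℂ) ^ (-((σ : ℂ) + (β : ℂ) + t * Complex.I)) with ha
  set c : ℕ → ℝ := fun m => (m : ℝ) ^ β with hc
  set g : ℕ → ℂ := fun i => if N₁ < i then a i else 0 with hg
  set S : ℕ → ℂ := fun n => ∑ m ∈ Finset.Ioc N₁ n, a m with hS
  have hG : ∀ n, ∑ i ∈ Finset.range (n + 1), g i = S n := by
    intro n
    rw [hS, hg]
    rw [← Finset.sum_filter]
    congr 1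
    ext i
    simp only [Finset.mem_filter, Finset.mem_range, Finset.mem_Ioc, Nat.lt_succ_iff]
    tauto
  -- rewrite LHS terms
  have hterm : ∀ m ∈ Finset.Ioc N₁ N₂,
      (m : ℂ) ^ (-((σ : ℂ) + t * Complex.I)) = c m • g m := by
    intro m hm
    rw [Finset.mem_Ioc] at hm
    have hm0 : (m : ℂ) ≠ 0 := by
      exact_mod_cast Nat.cast_ne_zero.mpr (by omega)
    rw [hg]
    simp only [hm.1, if_pos]
    rw [hc, ha]
    have : ((((m : ℝ) ^ β : ℝ)) : ℂ) = (m : ℂ) ^ (β : ℂ) := by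
      rw [Complex.ofReal_cpow (Nat.cast_nonneg m)]
      norm_num
    rw [Complex.real_smul, this, ← Complex.cpow_add _ _ hm0]
    ring_nf
  rw [Finset.sum_congr rfl hterm]
  -- Abel summation
  have habel := Finset.sum_Ioc_by_parts c g hlt
  simp only [hG] at habel
  have hSN₁ : S N₁ = 0 := by simp [hS]
  rw [hSN₁, smul_zero, sub_zero] at habel
  -- choose maximizing n₀
  obtain ⟨n₀, hn₀mem, hn₀max⟩ :=
    Finset.exists_max_image (Finset.Ioc N₁ N₂) (fun n => ‖S n‖)
      ⟨N₂, Finset.mem_Ioc.mpr ⟨hlt, le_refl _⟩⟩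
  rw [Finset.mem_Ioc] at hn₀mem
  set B : ℝ := ‖S n₀‖ with hB
  have hBnn : 0 ≤ B := norm_nonneg _
  -- c is nonneg and decreasing on [1, ∞)
  have hcnn : ∀ n : ℕ, 0 ≤ c n := fun n => Real.rpow_nonneg (Nat.cast_nonneg n) β
  have hcdec : ∀ i : ℕ, 1 ≤ i → c (i + 1) ≤ c i := by
    intro i hi
    exact Real.rpow_le_rpow_of_nonpos (by exact_mod_cast hi) (by push_cast; linarith) hβ.le
  -- bound the sum
  have key : ‖∑ i ∈ Finset.Ioc N₁ N₂, c i • g i‖ ≤ B * c (N₁ + 1) := by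
    rw [habel]
    calc ‖c N₂ • S N₂ - ∑ i ∈ Finset.Ioc N₁ (N₂ - 1), (c (i + 1) - c i) • S i‖
        ≤ ‖c N₂ • S N₂‖ + ‖∑ i ∈ Finset.Ioc N₁ (N₂ - 1), (c (i + 1) - c i) • S i‖ :=
          norm_sub_le _ _
      _ ≤ c N₂ * B + ∑ i ∈ Finset.Ioc N₁ (N₂ - 1), (c i - c (i + 1)) * B := by
          gcongr
          · rw [norm_smul, Real.norm_eq_abs, _root_.abs_of_nonneg (hcnn N₂)]
            exact mul_le_mul_of_nonneg_left
              (hn₀max N₂ (Finset.mem_Ioc.mpr ⟨hlt, le_refl _⟩)) (hcnn N₂)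
          · refine (norm_sum_le _ _).trans (Finset.sum_le_sum fun i hi => ?_)
            rw [Finset.mem_Ioc] at hi
            rw [norm_smul, Real.norm_eq_abs,
              abs_of_nonpos (by linarith [hcdec i (by omega)])]
            have : ‖S i‖ ≤ B := hn₀max i (Finset.mem_Ioc.mpr ⟨hi.1, by omega⟩)
            have h1 : 0 ≤ c i - c (i + 1) := by linarith [hcdec i (by omega)]
            calc -(c (i + 1) - c i) * ‖S i‖ = (c i - c (i + 1)) * ‖S i‖ := by ring
              _ ≤ (c i - c (i + 1)) * B := mul_le_mul_of_nonneg_left this h1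
      _ = c N₂ * B + (c (N₁ + 1) - c N₂) * B := by
          rw [← Finset.sum_mul]
          congr 2
          have : Finset.Ioc N₁ (N₂ - 1) = Finset.Ico (N₁ + 1) N₂ := by
            ext i; simp [Finset.mem_Ioc, Finset.mem_Ico]; omega
          rw [this, tel_sum c (N₁ + 1) N₂ hlt]
      _ = B * c (N₁ + 1) := by ring
  -- the chosen y
  refine ⟨(n₀ : ℝ), ⟨?_, ?_⟩, ?_⟩
  · calc M₁ < N₁ + 1 := Nat.lt_floor_add_one M₁
      _ ≤ (n₀ : ℝ) := by exact_mod_cast hn₀mem.1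
  · calc (n₀ : ℝ) ≤ N₂ := by exact_mod_cast hn₀mem.2
      _ ≤ M₂ := Nat.floor_le (by linarith)
  · have hfloor : ⌊(n₀ : ℝ)⌋₊ = n₀ := Nat.floor_natCast n₀
    rw [hfloor]
    have hc1 : c (N₁ + 1) ≤ M₁ ^ β := by
      rw [hc]
      exact Real.rpow_le_rpow_of_nonpos hM₁pos
        (by push_cast; linarith [(Nat.lt_floor_add_one M₁).le]) hβ.le
    have hMβ : 0 < M₁ ^ β := Real.rpow_pos_of_pos hM₁pos β
    calc ‖∑ i ∈ Finset.Ioc N₁ N₂, c i • g i‖ ≤ B * c (N₁ + 1) := key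
      _ ≤ B * M₁ ^ β := mul_le_mul_of_nonneg_left hc1 hBnn
      _ ≤ 4 * M₁ ^ β * B := by nlinarith
      _ = 4 * M₁ ^ β * ‖S n₀‖ := rfl
end

section
/- Let σ, t, β be real numbers and 1 ≤ M₁ < M₂. Then |∑_{M₁ < m ≤ M₂} m^{-(σ+it)}| ≤ 2(M₂^β + M₁^β) · max_{M₁ < y ≤ M₂} |∑_{M₁ < m ≤ y} m^{-(σ+β+it)}|. -/
open Finset Complex

lemma abel_aux_s2 (a : ℕ) (c g : ℕ → ℂ) :
    ∀ b, a ≤ b → ∑ m ∈ Finset.Ioc a b, c m * g m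
      = c (b+1) * (∑ m ∈ Finset.Ioc a b, g m)
        + ∑ m ∈ Finset.Ioc a b, (c m - c (m+1)) * (∑ k ∈ Finset.Ioc a m, g k) := by
  intro b hb
  induction b, hb using Nat.le_induction with
  | base => simp
  | succ n hn ih =>
    rw [Finset.sum_Ioc_succ_top hn, Finset.sum_Ioc_succ_top hn, Finset.sum_Ioc_succ_top hn,
      Finset.sum_Ioc_succ_top hn, ih]
    ring

/-- Partial summation comparison, general β. -/
theorem stmt_2 (σ t β M₁ M₂ : ℝ) (hM₁ : 1 ≤ M₁) (hM : M₁ < M₂) :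
    ∃ y ∈ Set.Ioc M₁ M₂,
      ‖∑ m ∈ Finset.Ioc ⌊M₁⌋₊ ⌊M₂⌋₊, (m : ℂ) ^ (-((σ : ℂ) + t * Complex.I))‖ ≤
        2 * (M₂ ^ β + M₁ ^ β) *
          ‖∑ m ∈ Finset.Ioc ⌊M₁⌋₊ ⌊y⌋₊, (m : ℂ) ^ (-((σ : ℂ) + (β : ℂ) + t * Complex.I))‖ := by
  have hM₁0 : (0:ℝ) < M₁ := lt_of_lt_of_le one_pos hM₁
  have hM₂0 : (0:ℝ) < M₂ := hM₁0.trans hM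
  have hP1 : (0:ℝ) < M₁ ^ β := Real.rpow_pos_of_pos hM₁0 β
  have hP2 : (0:ℝ) < M₂ ^ β := Real.rpow_pos_of_pos hM₂0 β
  have hP : (0:ℝ) < M₂ ^ β + M₁ ^ β := by linarith
  set a := ⌊M₁⌋₊ with ha
  set b := ⌊M₂⌋₊ with hb
  have ha1 : 1 ≤ a := Nat.le_floor (by exact_mod_cast hM₁)
  have haM : M₁ < a + 1 := Nat.lt_floor_add_one M₁
  have hbM : (b : ℝ) ≤ M₂ := Nat.floor_le hM₂0.le
  rcases le_or_gt b a with hba | hab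
  · -- degenerate: empty sum
    refine ⟨M₂, ⟨hM, le_refl _⟩, ?_⟩
    rw [Finset.Ioc_eq_empty (by exact_mod_cast not_lt.2 hba), Finset.sum_empty, norm_zero]
    positivity
  -- main case
  set g : ℕ → ℂ := fun m => (m : ℂ) ^ (-((σ : ℂ) + (β : ℂ) + t * Complex.I)) with hg
  set c : ℕ → ℝ := fun m => (m : ℝ) ^ β with hc
  have key : ∀ m ∈ Finset.Ioc a b, (m : ℂ) ^ (-((σ : ℂ) + t * Complex.I))
      = ((c m : ℝ) : ℂ) * g m := by
    intro m hm
    have hm0 : (0:ℕ) < m := lt_of_lt_of_le (lt_of_lt_of_le one_pos ha1) (Finset.mem_Ioc.1 hm).1.le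
    have hmne : (m : ℂ) ≠ 0 := by exact_mod_cast hm0.ne'
    have : -((σ : ℂ) + t * Complex.I) = (β : ℂ) + (-((σ : ℂ) + (β : ℂ) + t * Complex.I)) := by
      ring
    rw [this, Complex.cpow_add _ _ hmne]
    congr 1
    rw [hc]
    simp only
    rw [Complex.ofReal_cpow (Nat.cast_nonneg m)]
    push_cast
    rfl
  rw [Finset.sum_congr rfl key]
  -- apply Abel summation
  have habel := abel_aux_s2 a (fun m => ((c m : ℝ) : ℂ)) g b hab.le
  simp only at habel
  rw [habel]
  -- peel off the top term
  have hsplit : ∑ m ∈ Finset.Ioc a b, (((c m : ℝ) : ℂ) - ((c (m+1) : ℝ) : ℂ))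
        * (∑ k ∈ Finset.Ioc a m, g k)
      = (((c b : ℝ) : ℂ) - ((c (b+1) : ℝ) : ℂ)) * (∑ k ∈ Finset.Ioc a b, g k)
        + ∑ m ∈ Finset.Ioo a b, (((c m : ℝ) : ℂ) - ((c (m+1) : ℝ) : ℂ))
            * (∑ k ∈ Finset.Ioc a m, g k) := by
    conv_lhs => rw [← Finset.Ioo_insert_right hab]
    rw [Finset.sum_insert (by simp)]
  rw [hsplit]
  -- pick the maximizing index
  obtain ⟨n, hn, hmax⟩ := Finset.exists_max_image (Finset.Ioc a b)
    (fun m => ‖∑ k ∈ Finset.Ioc a m, g k‖) ⟨b, Finset.mem_Ioc.2 ⟨hab, le_refl b⟩⟩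
  set K := ‖∑ k ∈ Finset.Ioc a n, g k‖ with hK
  have hK0 : 0 ≤ K := norm_nonneg _
  obtain ⟨hna, hnb⟩ := Finset.mem_Ioc.1 hn
  refine ⟨(n : ℝ), ⟨lt_of_lt_of_le haM (by exact_mod_cast hna), le_trans (by exact_mod_cast hnb) hbM⟩, ?_⟩
  rw [Nat.floor_natCast]
  -- bounds on c
  have hcnonneg : ∀ m, 1 ≤ m → 0 ≤ c m := fun m hm =>
    Real.rpow_nonneg (Nat.cast_nonneg m) β
  have hbound : ∀ m : ℕ, M₁ < m → (m : ℝ) ≤ M₂ → c m ≤ M₂ ^ β + M₁ ^ β := by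
    intro m h1 h2
    rcases le_or_gt 0 β with hβ | hβ
    · have : c m ≤ M₂ ^ β := Real.rpow_le_rpow (Nat.cast_nonneg m) h2 hβ
      linarith
    · have : c m ≤ M₁ ^ β := Real.rpow_le_rpow_of_nonpos hM₁0 h1.le hβ.le
      linarith
  have hMa1 : M₁ < (a + 1 : ℕ) := by exact_mod_cast haM
  have hMb : M₁ < (b : ℝ) := lt_of_lt_of_le hMa1 (by exact_mod_cast hab)
  have hca1 : c (a+1) ≤ M₂ ^ β + M₁ ^ β :=
    hbound (a+1) hMa1 (le_trans (by exact_mod_cast hab) hbM)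
  have hcb : c b ≤ M₂ ^ β + M₁ ^ β := hbound b hMb hbM
  -- telescoping bound on variation
  have hIco : Finset.Ioo a b = Finset.Ico (a+1) b := by
    rw [Finset.Ico_add_one_left_eq_Ioo]
  have htel : ∑ m ∈ Finset.Ioo a b, |c m - c (m+1)| ≤ M₂ ^ β + M₁ ^ β := by
    rcases le_or_gt 0 β with hβ | hβ
    · have hmono : ∀ m ∈ Finset.Ioo a b, |c m - c (m+1)| = c (m+1) - c m := by
        intro m hm
        rw [abs_sub_comm, _root_.abs_of_nonneg]
        have : (m : ℝ) ≤ (m + 1 : ℕ) := by push_cast; linarith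
        have := Real.rpow_le_rpow (Nat.cast_nonneg m) this hβ
        simpa [hc] using sub_nonneg.2 this
      rw [Finset.sum_congr rfl hmono, hIco, Finset.sum_Ico_eq_sub _ hab,
        Finset.sum_range_sub (fun i => c i), Finset.sum_range_sub (fun i => c i)]
      have h0 : 0 ≤ c (a+1) := hcnonneg _ (Nat.le_add_left 1 a)
      linarith
    · have hmono : ∀ m ∈ Finset.Ioo a b, |c m - c (m+1)| = c m - c (m+1) := by
        intro m hm
        rw [_root_.abs_of_nonneg]
        have hm1 : (0:ℕ) < m := lt_of_lt_of_le (lt_of_lt_of_le one_pos ha1) (Finset.mem_Ioo.1 hm).1.le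
        have hmpos : (0:ℝ) < (m : ℝ) := by exact_mod_cast hm1
        have : (m : ℝ) ≤ (m + 1 : ℕ) := by push_cast; linarith
        have := Real.rpow_le_rpow_of_nonpos hmpos this hβ.le
        simpa [hc] using sub_nonneg.2 this
      rw [Finset.sum_congr rfl hmono, hIco, Finset.sum_Ico_eq_sub _ hab,
        Finset.sum_range_sub' (fun i => c i), Finset.sum_range_sub' (fun i => c i)]
      have h0 : 0 ≤ c b := hcnonneg _ (le_trans ha1 hab.le)
      linarith
  -- now the norm estimate
  have hSb : ‖∑ k ∈ Finset.Ioc a b, g k‖ ≤ K :=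
    hmax b (Finset.mem_Ioc.2 ⟨hab, le_refl b⟩)
  calc ‖((c (b+1) : ℝ) : ℂ) * (∑ k ∈ Finset.Ioc a b, g k)
        + ((((c b : ℝ) : ℂ) - ((c (b+1) : ℝ) : ℂ)) * (∑ k ∈ Finset.Ioc a b, g k)
          + ∑ m ∈ Finset.Ioo a b, (((c m : ℝ) : ℂ) - ((c (m+1) : ℝ) : ℂ))
              * (∑ k ∈ Finset.Ioc a m, g k))‖
      = ‖((c b : ℝ) : ℂ) * (∑ k ∈ Finset.Ioc a b, g k)
          + ∑ m ∈ Finset.Ioo a b, (((c m : ℝ) : ℂ) - ((c (m+1) : ℝ) : ℂ))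
              * (∑ k ∈ Finset.Ioc a m, g k)‖ := by congr 1; ring
    _ ≤ ‖((c b : ℝ) : ℂ) * (∑ k ∈ Finset.Ioc a b, g k)‖
          + ‖∑ m ∈ Finset.Ioo a b, (((c m : ℝ) : ℂ) - ((c (m+1) : ℝ) : ℂ))
              * (∑ k ∈ Finset.Ioc a m, g k)‖ := norm_add_le _ _
    _ ≤ (M₂ ^ β + M₁ ^ β) * K + (M₂ ^ β + M₁ ^ β) * K := by
        gcongr ?_ + ?_
        · rw [norm_mul, Complex.norm_real, Real.norm_eq_abs,
            _root_.abs_of_nonneg (hcnonneg b (le_trans ha1 hab.le))]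
          exact mul_le_mul hcb hSb (norm_nonneg _) hP.le
        · calc ‖∑ m ∈ Finset.Ioo a b, (((c m : ℝ) : ℂ) - ((c (m+1) : ℝ) : ℂ))
                  * (∑ k ∈ Finset.Ioc a m, g k)‖
              ≤ ∑ m ∈ Finset.Ioo a b, ‖(((c m : ℝ) : ℂ) - ((c (m+1) : ℝ) : ℂ))
                  * (∑ k ∈ Finset.Ioc a m, g k)‖ := norm_sum_le _ _
            _ ≤ ∑ m ∈ Finset.Ioo a b, |c m - c (m+1)| * K := by
                refine Finset.sum_le_sum fun m hm => ?_
                rw [norm_mul]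
                have h1 : ‖(((c m : ℝ) : ℂ) - ((c (m+1) : ℝ) : ℂ))‖ = |c m - c (m+1)| := by
                  rw [← Complex.ofReal_sub, Complex.norm_real, Real.norm_eq_abs]
                rw [h1]
                exact mul_le_mul_of_nonneg_left
                  (hmax m (Finset.Ioo_subset_Ioc_self hm)) (abs_nonneg _)
            _ = (∑ m ∈ Finset.Ioo a b, |c m - c (m+1)|) * K := by rw [Finset.sum_mul]
            _ ≤ (M₂ ^ β + M₁ ^ β) * K := mul_le_mul_of_nonneg_right htel hK0
    _ = 2 * (M₂ ^ β + M₁ ^ β) * K := by ring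
end

section
/- Let T ≥ 3, ν ∈ [0, 1/2], and ε, η ∈ (0,1) with T ≥ 4^{2/(εη)}. If t ∈ [−T, T] satisfies |∑_{M < m ≤ M'} m^{-(1+it)}| ≥ M^{-ν} for some real M ∈ [T^ε, T^{1/2}/2] and M' ∈ (M, 2M], then there exist reals A, B with 1 ≤ A ≤ B ≤ T^{1/2}, B ≤ 2A, such that |∑_{A < n ≤ B} n^{-(1-ν-η+it)}| ≥ T^{εη/2}. -/
open Finset Complex

lemma pow_split (n : ℕ) (hn : 1 ≤ n) (ν η t : ℝ) :
    (n : ℂ) ^ (-((1 : ℂ) + t * Complex.I))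
      = ((n:ℝ) ^ (-(ν+η)) : ℝ) • (n : ℂ) ^ (-(((1 - ν - η : ℝ) : ℂ) + t * Complex.I)) := by
  have hn0 : (n : ℂ) ≠ 0 := Nat.cast_ne_zero.mpr (by omega)
  rw [Complex.real_smul, Complex.ofReal_cpow (Nat.cast_nonneg n)]
  push_cast
  rw [← Complex.cpow_add _ _ hn0]
  congr 1
  push_cast
  ring

lemma abel_aux_s8 (m0 : ℕ) (w : ℕ → ℝ) (b : ℕ → ℂ) (C : ℝ)
    (hdec : ∀ k, m0 < k → w (k+1) ≤ w k) :
    ∀ N, m0 < N → (∀ k, m0 < k → k ≤ N → ‖∑ n ∈ Finset.Ioc m0 k, b n‖ ≤ C) →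
      ‖(∑ n ∈ Finset.Ioc m0 N, w n • b n) - w N • ∑ n ∈ Finset.Ioc m0 N, b n‖
        ≤ (w (m0+1) - w N) * C := by
  intro N
  induction N with
  | zero => omega
  | succ N ih =>
    intro hN hS
    rcases Nat.lt_or_ge m0 N with hlt | hge
    · have key := ih hlt (fun k hk hk' => hS k hk (by omega))
      have hsum1 : ∑ n ∈ Finset.Ioc m0 (N+1), w n • b n
          = (∑ n ∈ Finset.Ioc m0 N, w n • b n) + w (N+1) • b (N+1) :=
        Finset.sum_Ioc_succ_top hlt.le _
      have hsum2 : ∑ n ∈ Finset.Ioc m0 (N+1), b n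
          = (∑ n ∈ Finset.Ioc m0 N, b n) + b (N+1) :=
        Finset.sum_Ioc_succ_top hlt.le _
      have hC : ‖∑ n ∈ Finset.Ioc m0 N, b n‖ ≤ C := hS N hlt (by omega)
      have hwd : w (N+1) ≤ w N := hdec N hlt
      have hid : (∑ n ∈ Finset.Ioc m0 (N+1), w n • b n)
            - w (N+1) • ∑ n ∈ Finset.Ioc m0 (N+1), b n
          = ((∑ n ∈ Finset.Ioc m0 N, w n • b n) - w N • ∑ n ∈ Finset.Ioc m0 N, b n)
            + (w N - w (N+1)) • (∑ n ∈ Finset.Ioc m0 N, b n) := by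
        rw [hsum1, hsum2]; module
      rw [hid]
      calc ‖_ + _‖ ≤ ‖(∑ n ∈ Finset.Ioc m0 N, w n • b n)
              - w N • ∑ n ∈ Finset.Ioc m0 N, b n‖
            + ‖(w N - w (N+1)) • (∑ n ∈ Finset.Ioc m0 N, b n)‖ := norm_add_le _ _
        _ ≤ (w (m0+1) - w N) * C + (w N - w (N+1)) * C := by
            refine add_le_add key ?_
            rw [norm_smul, Real.norm_eq_abs, _root_.abs_of_nonneg (by linarith)]
            exact mul_le_mul_of_nonneg_left hC (by linarith)
        _ = (w (m0+1) - w (N+1)) * C := by ring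
    · have hNm : N = m0 := by omega
      subst hNm
      simp [Finset.sum_Ioc_succ_top (le_refl N), Finset.Ioc_self]

/-- Lemma le_density1: containment of large-value sets via partial summation. -/
theorem stmt_8 (T ν ε η t : ℝ) (hT : 3 ≤ T) (hν : ν ∈ Set.Icc 0 (1/2))
    (hε : ε ∈ Set.Ioo 0 1) (hη : η ∈ Set.Ioo 0 1)
    (hT4 : (4 : ℝ) ^ (2 / (ε * η)) ≤ T) (ht : t ∈ Set.Icc (-T) T)
    (h : ∃ M M' : ℝ, T ^ ε ≤ M ∧ M ≤ T ^ ((1 : ℝ)/2) / 2 ∧ M < M' ∧ M' ≤ 2 * M ∧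
      M ^ (-ν) ≤ ‖∑ m ∈ Finset.Ioc ⌊M⌋₊ ⌊M'⌋₊, (m : ℂ) ^ (-((1 : ℂ) + t * Complex.I))‖) :
    ∃ A B : ℝ, 1 ≤ A ∧ A ≤ B ∧ B ≤ T ^ ((1 : ℝ)/2) ∧ B ≤ 2 * A ∧
      T ^ (ε * η / 2) ≤
        ‖∑ n ∈ Finset.Ioc ⌊A⌋₊ ⌊B⌋₊,
            (n : ℂ) ^ (-(((1 - ν - η : ℝ) : ℂ) + t * Complex.I))‖ := by
  obtain ⟨M, M', hMε, hMT, hMM', hM2, hbig⟩ := h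
  obtain ⟨hν0, hν1⟩ := hν
  obtain ⟨hε0, hε1⟩ := hε
  obtain ⟨hη0, hη1⟩ := hη
  have hT0 : (0:ℝ) < T := by linarith
  have hT1 : (1:ℝ) ≤ T := by linarith
  have hTε1 : (1:ℝ) ≤ T ^ ε := Real.one_le_rpow hT1 hε0.le
  have hM1 : (1:ℝ) ≤ M := le_trans hTε1 hMε
  have hM0 : (0:ℝ) < M := by linarith
  set m0 := ⌊M⌋₊ with hm0
  set N := ⌊M'⌋₊ with hN
  set b : ℕ → ℂ := fun n => (n : ℂ) ^ (-(((1 - ν - η : ℝ) : ℂ) + t * Complex.I)) with hb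
  set w : ℕ → ℝ := fun n => (n : ℝ) ^ (-(ν + η)) with hw
  have hm01 : 1 ≤ m0 := Nat.le_floor (by exact_mod_cast hM1)
  -- m0 < N
  have hm0N : m0 < N := by
    by_contra hcon
    rw [Finset.Ioc_eq_empty hcon] at hbig
    simp at hbig
    exact absurd hbig (not_le.mpr (Real.rpow_pos_of_pos hM0 _))
  -- rewrite the sum with weights
  have hterm : ∀ n ∈ Finset.Ioc m0 N, (n : ℂ) ^ (-((1 : ℂ) + t * Complex.I)) = w n • b n := by
    intro n hn
    have hn1 : 1 ≤ n := by have := (Finset.mem_Ioc.mp hn).1; omega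
    exact pow_split n hn1 ν η t
  have hsum_eq : ∑ m ∈ Finset.Ioc m0 N, (m : ℂ) ^ (-((1 : ℂ) + t * Complex.I))
      = ∑ n ∈ Finset.Ioc m0 N, w n • b n := Finset.sum_congr rfl hterm
  -- pick the maximizer
  obtain ⟨k, hk, hkmax⟩ := Finset.exists_max_image (Finset.Ioc m0 N)
    (fun j => ‖∑ n ∈ Finset.Ioc m0 j, b n‖) ⟨N, Finset.mem_Ioc.mpr ⟨hm0N, le_refl N⟩⟩
  obtain ⟨hkl, hku⟩ := Finset.mem_Ioc.mp hk
  set C := ‖∑ n ∈ Finset.Ioc m0 k, b n‖ with hC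
  have hC0 : 0 ≤ C := norm_nonneg _
  have hdec : ∀ j, m0 < j → w (j+1) ≤ w j := by
    intro j hj
    have hj0 : (0:ℝ) < j := by exact_mod_cast lt_of_le_of_lt (Nat.zero_le m0) hj
    exact Real.rpow_le_rpow_of_nonpos hj0
      (show (j:ℝ) ≤ ((j+1 : ℕ) : ℝ) by push_cast; linarith) (by linarith)
  have hSbound : ∀ j, m0 < j → j ≤ N → ‖∑ n ∈ Finset.Ioc m0 j, b n‖ ≤ C :=
    fun j h1 h2 => hkmax j (Finset.mem_Ioc.mpr ⟨h1, h2⟩)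
  have habel := abel_aux_s8 m0 w b C hdec N hm0N hSbound
  have hwN0 : 0 ≤ w N := Real.rpow_nonneg (Nat.cast_nonneg N) _
  have hbound : ‖∑ n ∈ Finset.Ioc m0 N, w n • b n‖ ≤ w (m0+1) * C := by
    calc ‖∑ n ∈ Finset.Ioc m0 N, w n • b n‖
        ≤ ‖(∑ n ∈ Finset.Ioc m0 N, w n • b n) - w N • ∑ n ∈ Finset.Ioc m0 N, b n‖
          + ‖w N • ∑ n ∈ Finset.Ioc m0 N, b n‖ := by
          have := norm_add_le ((∑ n ∈ Finset.Ioc m0 N, w n • b n)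
            - w N • ∑ n ∈ Finset.Ioc m0 N, b n) (w N • ∑ n ∈ Finset.Ioc m0 N, b n)
          rwa [sub_add_cancel] at this
      _ ≤ (w (m0+1) - w N) * C + w N * C := by
          refine add_le_add habel ?_
          rw [norm_smul, Real.norm_eq_abs, _root_.abs_of_nonneg hwN0]
          exact mul_le_mul_of_nonneg_left (hSbound N hm0N (le_refl N)) hwN0
      _ = w (m0+1) * C := by ring
  -- w (m0+1) ≤ M ^ (-(ν+η))
  have hMlt : M < (m0:ℝ) + 1 := Nat.lt_floor_add_one M
  have hw1 : w (m0+1) ≤ M ^ (-(ν + η)) := by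
    have := Real.rpow_le_rpow_of_nonpos hM0
      (show M ≤ ((m0+1 : ℕ) : ℝ) by push_cast; linarith)
      (by linarith : -(ν+η) ≤ 0)
    simpa [hw] using this
  -- deduce C ≥ M ^ η
  have hchain : M ^ (-ν) ≤ M ^ (-(ν + η)) * C := by
    calc M ^ (-ν) ≤ ‖∑ n ∈ Finset.Ioc m0 N, w n • b n‖ := by rw [← hsum_eq]; exact hbig
      _ ≤ w (m0+1) * C := hbound
      _ ≤ M ^ (-(ν + η)) * C := mul_le_mul_of_nonneg_right hw1 hC0
  have hMν : M ^ η ≤ C := by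
    have hpos : (0:ℝ) < M ^ (-(ν + η)) := Real.rpow_pos_of_pos hM0 _
    have hdivC : M ^ (-ν) / M ^ (-(ν + η)) ≤ C := by
      rw [div_le_iff₀ hpos]
      linarith [hchain, mul_comm C (M ^ (-(ν + η)))]
    have heq : M ^ (-ν) / M ^ (-(ν + η)) = M ^ η := by
      rw [← Real.rpow_sub hM0]
      norm_num
    linarith [heq ▸ hdivC]
  -- final chain for the bound
  have hfinal : T ^ (ε * η / 2) ≤ C := by
    have h1 : T ^ (ε * η / 2) ≤ T ^ (ε * η) :=
      Real.rpow_le_rpow_of_exponent_le hT1 (by nlinarith)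
    have h2 : T ^ (ε * η) = (T ^ ε) ^ η := Real.rpow_mul hT0.le ε η
    have h3 : (T ^ ε) ^ η ≤ M ^ η :=
      Real.rpow_le_rpow (Real.rpow_nonneg hT0.le ε) hMε hη0.le
    linarith
  -- provide the witnesses
  refine ⟨M, (k : ℝ), hM1, ?_, ?_, ?_, ?_⟩
  · have : M < (m0:ℝ) + 1 := hMlt
    have hk1 : (m0:ℝ) + 1 ≤ (k:ℝ) := by exact_mod_cast hkl
    linarith
  · have hkN : (k:ℝ) ≤ (N:ℝ) := by exact_mod_cast hku
    have hNM' : (N:ℝ) ≤ M' := Nat.floor_le (by linarith)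
    linarith
  · have hkN : (k:ℝ) ≤ (N:ℝ) := by exact_mod_cast hku
    have hNM' : (N:ℝ) ≤ M' := Nat.floor_le (by linarith)
    linarith
  · rw [Nat.floor_natCast]
    exact hfinal
end
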